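/- Let C be a choice function satisfying consistency, substitutability, and cardinal monotonicity, let X and Y be acceptable sets with C(Y ∪ X) = Y, and let a ∉ X with C(X ∪ {a}) = (X ∪ {a}) \ {b} for some b ∈ X. If a ∉ Y and C(Y ∪ {a}) = Y, then b ∉ Y. -/

import Mathlib

theorem stmt16 {E : Type*} [DecidableEq E] [Fintype E] (C : Finset E → Finset E)
    (hsub : ∀ Z, C Z ⊆ Z)
    (hA1 : ∀ Z Z', Z' ⊆ Z → C Z ⊆ Z' → C Z' = C Z)
    (hA2 : ∀ Z Z', Z' ⊆ Z → C Z ∩ Z' ⊆ C Z')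
    (hA3 : ∀ Z Z', Z' ⊆ Z → (C Z').card ≤ (C Z).card)
    (X Y : Finset E) (hX : C X = X) (hY : C Y = Y) (hYX : C (Y ∪ X) = Y)
    (a : E) (haX : a ∉ X) (b : E) (hbX : b ∈ X)
    (htan : C (X ∪ {a}) = (X ∪ {a}) \ {b})
    (haY : a ∉ Y) (hYa : C (Y ∪ {a}) = Y) :
    b ∉ Y := by
  intro hbY
  have haCW : a ∉ C (Y ∪ X ∪ {a}) := by
    intro ha
    have h1 : a ∈ C (Y ∪ X ∪ {a}) ∩ (Y ∪ {a}) :=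
      Finset.mem_inter.mpr ⟨ha, by simp⟩
    have h2 := hA2 (Y ∪ X ∪ {a}) (Y ∪ {a})
      (by intro x hx; simp [Finset.mem_union] at hx ⊢; tauto) h1
    rw [hYa] at h2
    exact haY h2
  have hCWsub : C (Y ∪ X ∪ {a}) ⊆ Y ∪ X := by
    intro x hx
    have hx' := hsub _ hx
    simp [Finset.mem_union] at hx' ⊢
    rcases hx' with h | h | h
    · exact absurd (h ▸ hx) haCW
    · exact Or.inl h
    · exact Or.inr h
  have hCW : C (Y ∪ X ∪ {a}) = Y := by
    exact (hA1 (Y ∪ X ∪ {a}) (Y ∪ X) Finset.subset_union_left hCWsub).symm.trans hYX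
  have hb1 : b ∈ C (Y ∪ X ∪ {a}) ∩ (X ∪ {a}) := by
    rw [hCW]; exact Finset.mem_inter.mpr ⟨hbY, by simp [hbX]⟩
  have hb2 := hA2 (Y ∪ X ∪ {a}) (X ∪ {a})
    (by intro x hx; simp [Finset.mem_union] at hx ⊢; tauto) hb1
  rw [htan] at hb2
  simp at hb2
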